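/- Let w = w₁…wₙ be a finite 0-1 word and let l ∈ ℕ. If every constant factor of w (a factor all of whose letters are 0, or all 1) has length at most l, and n > l + 4, then the graph G_w is prime. Equivalently, if G_w is not prime then w contains 0^{n-4} or 1^{n-4} as a factor. -/

import Mathlib

/-- Adjacency rule of the graph associated with a 0-1 word `μ` (letters indexed from 1):
for `i < j`, `{i,j}` is an edge iff (`μ j = 1` and `j = i+1`) or (`μ j = 0` and `j ≠ i+1`). -/
def GmuAdj (μ : ℕ → Bool) (i j : ℕ) : Prop :=
  (i < j ∧ ((μ j = true ∧ j = i + 1) ∨ (μ j = false ∧ j ≠ i + 1))) ∨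
  (j < i ∧ ((μ i = true ∧ i = j + 1) ∨ (μ i = false ∧ i ≠ j + 1)))

/-- The graph `G_μ` on `ℕ` associated with the 0-1 word `μ : {1,2,…} → {0,1}`. -/
def Gmu (μ : ℕ → Bool) : SimpleGraph ℕ where
  Adj i j := GmuAdj μ i j
  symm := ⟨fun i j h => Or.symm h⟩
  loopless := ⟨fun i h => by
    rcases h with ⟨h1, _⟩ | ⟨h1, _⟩ <;> exact lt_irrefl i h1⟩

/-- Adjacency rule for the graph of a finite 0-1 word `w = w₁…wₙ` on vertices `{0,…,n}`. -/
def GWAdj (w : List Bool) (i j : ℕ) : Prop :=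
  (i < j ∧ ((w.getD (j - 1) false = true ∧ j = i + 1) ∨
            (w.getD (j - 1) false = false ∧ j ≠ i + 1))) ∨
  (j < i ∧ ((w.getD (i - 1) false = true ∧ i = j + 1) ∨
            (w.getD (i - 1) false = false ∧ i ≠ j + 1)))

/-- The graph `G_w` of a finite 0-1 word `w = w₁…wₙ`, on the vertex set `{0,1,…,n}`. -/
def GW (w : List Bool) : SimpleGraph (Fin (w.length + 1)) where
  Adj i j := GWAdj w i j
  symm := ⟨fun i j h => Or.symm h⟩
  loopless := ⟨fun i h => by
    rcases h with ⟨h1, _⟩ | ⟨h1, _⟩ <;> exact lt_irrefl (i : ℕ) h1⟩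

/-- `M` is a module of the graph `G`: every vertex outside `M` is adjacent either to all
vertices of `M` or to none of them. -/
def IsModule {V : Type*} (G : SimpleGraph V) (M : Set V) : Prop :=
  ∀ x ∉ M, (∀ a ∈ M, G.Adj x a) ∨ (∀ a ∈ M, ¬ G.Adj x a)

/-- A graph is prime if its only modules are the empty set, singletons and the whole
vertex set. -/
def GraphPrime {V : Type*} (G : SimpleGraph V) : Prop :=
  ∀ M : Set V, IsModule G M → M = ∅ ∨ (∃ a, M = {a}) ∨ M = Set.univ

lemma gw_symm {w : List Bool} {i j : ℕ} : GWAdj w i j ↔ GWAdj w j i :=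
  ⟨Or.symm, Or.symm⟩

lemma H1' {w : List Bool} {x j : ℕ} (h : x + 2 ≤ j) :
    GWAdj w x j ↔ w.getD (j-1) false = false := by
  constructor
  · rintro (⟨-, ⟨-, h2⟩ | ⟨h1, -⟩⟩ | ⟨h1, -⟩)
    · omega
    · exact h1
    · omega
  · intro hf; exact Or.inl ⟨by omega, Or.inr ⟨hf, by omega⟩⟩

lemma H2' {w : List Bool} {x j : ℕ} (h : j = x + 1) :
    GWAdj w x j ↔ w.getD (j-1) false = true := by
  constructor
  · rintro (⟨-, ⟨h1, -⟩ | ⟨-, h2⟩⟩ | ⟨h1, -⟩)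
    · exact h1
    · omega
    · omega
  · intro hf; exact Or.inl ⟨by omega, Or.inl ⟨hf, h⟩⟩

lemma H3' {w : List Bool} {x j : ℕ} (h : j + 2 ≤ x) :
    GWAdj w x j ↔ w.getD (x-1) false = false :=
  gw_symm.trans (H1' h)

lemma H4' {w : List Bool} {x j : ℕ} (h : x = j + 1) :
    GWAdj w x j ↔ w.getD (x-1) false = true :=
  gw_symm.trans (H2' h)

lemma bool_clash {A B : Bool} (h1 : (A = true) ↔ (B = false))
    (h2 : (A = false) ↔ (B = false)) : False := by
  cases A <;> cases B <;> simp_all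

lemma bool_eq {A B : Bool} (h : (A = false) ↔ (B = false)) : A = B := by
  cases A <;> cases B <;> simp_all

lemma run_infix (w : List Bool) (c : Bool) (lo len : ℕ) (h1 : 1 ≤ lo)
    (h2 : lo - 1 + len ≤ w.length)
    (h3 : ∀ k, lo ≤ k → k < lo + len → w.getD (k-1) false = c) :
    List.replicate len c <:+: w := by
  have key : (w.drop (lo-1)).take len = List.replicate len c := by
    rw [List.eq_replicate_iff]
    constructor
    · rw [List.length_take, List.length_drop]; omega
    · intro b hb
      rw [List.mem_iff_getElem] at hb
      obtain ⟨i, hi, rfl⟩ := hb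
      rw [List.getElem_take, List.getElem_drop]
      have hi' : i < len := by
        have := hi; simp [List.length_take, List.length_drop] at this; omega
      have := h3 (lo + i) (by omega) (by omega)
      rw [List.getD_eq_getElem w false (by omega)] at this
      rw [← this]; congr 1; omega
  have hinf : (w.drop (lo-1)).take len <:+: w :=
    ((List.take_prefix len _).isInfix).trans ((List.drop_suffix (lo-1) w).isInfix)
  rwa [key] at hinf

lemma run_done (w : List Bool) (c : Bool) (lo : ℕ) (h1 : 1 ≤ lo)
    (h2 : lo - 1 + (w.length - 4) ≤ w.length)
    (h3 : ∀ k, lo ≤ k → k < lo + (w.length - 4) → w.getD (k-1) false = c) :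
    List.replicate (w.length - 4) false <:+: w ∨
      List.replicate (w.length - 4) true <:+: w := by
  cases c
  · exact Or.inl (run_infix w false lo _ h1 h2 h3)
  · exact Or.inr (run_infix w true lo _ h1 h2 h3)

lemma core (w : List Bool) (P : ℕ → Prop)
    (hmod : ∀ x, x ≤ w.length → ¬ P x → ∀ a, a ≤ w.length → P a →
      ∀ b, b ≤ w.length → P b → (GWAdj w x a ↔ GWAdj w x b))
    (a b : ℕ) (ha : a ≤ w.length) (hb : b ≤ w.length) (hab : a ≠ b)
    (hPa : P a) (hPb : P b)
    (c : ℕ) (hc : c ≤ w.length) (hPc : ¬ P c) :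
    List.replicate (w.length - 4) false <:+: w ∨
      List.replicate (w.length - 4) true <:+: w := by
  classical
  by_cases hn5 : w.length < 5
  · left
    have h0 : w.length - 4 = 0 := by omega
    rw [h0]
    exact List.nil_infix
  push_neg at hn5
  set n := w.length with hn
  have hex : ∃ k, P k ∧ k ≤ n := ⟨a, hPa, ha⟩
  set m := Nat.find hex with hm
  obtain ⟨hPm, hmn⟩ := Nat.find_spec hex
  have hmmin : ∀ k, k < m → ¬ P k := fun k hk hPk =>
    Nat.find_min hex hk ⟨hPk, by omega⟩
  have hma : m ≤ a := Nat.find_min' hex ⟨hPa, ha⟩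
  have hmb : m ≤ b := Nat.find_min' hex ⟨hPb, hb⟩
  have hex2 : ∃ k, m < k ∧ P k ∧ k ≤ n := by
    rcases eq_or_ne a m with rfl | hne
    · exact ⟨b, by omega, hPb, hb⟩
    · exact ⟨a, by omega, hPa, ha⟩
  set s := Nat.find hex2 with hs
  obtain ⟨hms, hPs, hsn⟩ := Nat.find_spec hex2
  have hsmin : ∀ k, m < k → k < s → ¬ P k := fun k h1 h2 hPk =>
    Nat.find_min hex2 h2 ⟨h1, hPk, by omega⟩
  clear hm hs
  have hup : ∀ t, s ≤ t → t ≤ n → P t := by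
    intro t hst
    induction t, hst using Nat.le_induction with
    | base => intro _; exact hPs
    | succ t hst ih =>
      intro htn
      have hPt : P t := ih (by omega)
      by_contra hnp
      have hiff := hmod (t+1) (by omega) hnp m (by omega) hPm t (by omega) hPt
      rw [H3' (by omega), H4' rfl] at hiff
      cases hg : w.getD (t+1-1) false <;> simp [hg] at hiff
  have hcs : c < s := by
    by_contra h
    exact hPc (hup c (by omega) hc)
  have hcm : c ≠ m := fun h => hPc (h ▸ hPm)
  rcases eq_or_lt_of_le (show m + 1 ≤ s by omega) with hsm1 | hsm2
  · -- Case A : s = m + 1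
    have hm1 : 1 ≤ m := by omega
    have hPs' : P (m+1) := hsm1 ▸ hPs
    have hs1n : m + 1 ≤ n := by omega
    by_cases hm2 : 2 ≤ m
    · exfalso
      have h₁ := hmod (m-1) (by omega) (hmmin _ (by omega)) m (by omega) hPm
        (m+1) hs1n hPs'
      rw [H2' (by omega), H1' (by omega)] at h₁
      have h₂ := hmod 0 (by omega) (hmmin 0 (by omega)) m (by omega) hPm
        (m+1) hs1n hPs'
      rw [H1' (by omega), H1' (by omega)] at h₂
      exact bool_clash h₁ h₂
    · -- m = 1, run on [2, n]
      have hm1' : m = 1 := by omega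
      have hP2 : P 2 := by
        have he2 : m + 1 = 2 := by omega
        rwa [he2] at hPs'
      apply run_done w (w.getD (2-1) false) 2 (by omega) (by omega)
      intro k hk2 hklt
      rcases eq_or_lt_of_le hk2 with rfl | hk3
      · rfl
      · have h := hmod 0 (by omega) (hmmin 0 (by omega)) 2 (by omega) hP2
          k (by omega) (hup k (by omega) (by omega))
        rw [H1' (by omega), H1' (by omega)] at h
        exact (bool_eq h).symm
  · -- Case B : s ≥ m + 2
    have hnPs1 : ¬ P (s-1) := hsmin (s-1) (by omega) (by omega)
    by_cases hm0 : 1 ≤ m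
    · -- B1
      by_cases hsltn : s + 1 ≤ n
      · exfalso
        have hPss : P (s+1) := hup (s+1) (by omega) (by omega)
        have h₁ := hmod (s-1) (by omega) hnPs1 s (by omega) hPs (s+1) (by omega) hPss
        rw [H2' (by omega), H1' (by omega)] at h₁
        have h₂ := hmod 0 (by omega) (hmmin 0 (by omega)) s (by omega) hPs
          (s+1) (by omega) hPss
        rw [H1' (by omega), H1' (by omega)] at h₂
        exact bool_clash h₁ h₂
      · -- s = n
        have hseq : s = n := by omega
        by_cases hm2 : 2 ≤ m
        · exfalso
          have h₁ := hmod 0 (by omega) (hmmin 0 (by omega)) m (by omega) hPm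
            s (by omega) hPs
          rw [H1' (by omega), H1' (by omega)] at h₁
          have h₂ := hmod (m-1) (by omega) (hmmin _ (by omega)) m (by omega) hPm
            s (by omega) hPs
          rw [H2' (by omega), H1' (by omega)] at h₂
          exact bool_clash h₂ h₁
        · -- m = 1, s = n : run on [3, n-2]
          have hm1' : m = 1 := by omega
          have hP1 : P 1 := hm1' ▸ hPm
          apply run_done w (w.getD (s-1) false) 3 (by omega) (by omega)
          intro k hk3 hklt
          have h := hmod k (by omega) (hsmin k (by omega) (by omega))
            1 (by omega) hP1 s (by omega) hPs
          rw [H3' (by omega), H1' (by omega)] at h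
          exact bool_eq h
    · -- B2 : m = 0
      have hm0' : m = 0 := by omega
      have hP0 : P 0 := hm0' ▸ hPm
      by_cases hs3 : s ≤ 3
      · -- run on [3, n]
        have hP3 : P 3 := hup 3 (by omega) (by omega)
        have hnP1 : ¬ P 1 := hsmin 1 (by omega) (by omega)
        apply run_done w (w.getD (3-1) false) 3 (by omega) (by omega)
        intro k hk3 hklt
        rcases eq_or_lt_of_le hk3 with rfl | hk4
        · rfl
        · have h := hmod 1 (by omega) hnP1 3 (by omega) hP3
            k (by omega) (hup k (by omega) (by omega))
          rw [H1' (by omega), H1' (by omega)] at h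
          exact (bool_eq h).symm
      · -- s ≥ 4
        by_cases hsltn : s + 1 ≤ n
        · exfalso
          have hPss : P (s+1) := hup (s+1) (by omega) (by omega)
          have h₁ := hmod (s-1) (by omega) hnPs1 s (by omega) hPs
            (s+1) (by omega) hPss
          rw [H2' (by omega), H1' (by omega)] at h₁
          have h₂ := hmod 2 (by omega) (hsmin 2 (by omega) (by omega)) s (by omega)
            hPs (s+1) (by omega) hPss
          rw [H1' (by omega), H1' (by omega)] at h₂
          exact bool_clash h₁ h₂
        · -- s = n : run on [2, n-2]
          have hseq : s = n := by omega
          apply run_done w (w.getD (s-1) false) 2 (by omega) (by omega)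
          intro k hk2 hklt
          have h := hmod k (by omega) (hsmin k (by omega) (by omega))
            0 (by omega) hP0 s (by omega) hPs
          rw [H3' (by omega), H1' (by omega)] at h
          exact bool_eq h

lemma part2 (w : List Bool) (hnp : ¬ GraphPrime (GW w)) :
    List.replicate (w.length - 4) false <:+: w ∨
      List.replicate (w.length - 4) true <:+: w := by
  classical
  rw [GraphPrime] at hnp
  push_neg at hnp
  obtain ⟨M, hM, hne, hsing, huniv⟩ := hnp
  obtain ⟨af, haf⟩ := hne
  have hbf' : ∃ bf ∈ M, bf ≠ af := by
    by_contra h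
    push_neg at h
    exact hsing af (Set.eq_singleton_iff_unique_mem.mpr ⟨haf, h⟩)
  obtain ⟨bf, hbf, hba⟩ := hbf'
  have hcf' : ∃ cf, cf ∉ M := by
    by_contra h
    push_neg at h
    exact huniv (Set.eq_univ_iff_forall.mpr h)
  obtain ⟨cf, hcf⟩ := hcf'
  set P : ℕ → Prop :=
    fun k => ∃ h : k < w.length + 1, (⟨k, h⟩ : Fin (w.length + 1)) ∈ M with hP
  have hmod : ∀ x, x ≤ w.length → ¬ P x → ∀ a, a ≤ w.length → P a →
      ∀ b, b ≤ w.length → P b → (GWAdj w x a ↔ GWAdj w x b) := by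
    intro x hx hPx a ha hPa b hb hPb
    obtain ⟨ha', haM⟩ := hPa
    obtain ⟨hb', hbM⟩ := hPb
    have hxM : (⟨x, by omega⟩ : Fin (w.length + 1)) ∉ M := fun h => hPx ⟨by omega, h⟩
    rcases hM _ hxM with h | h
    · exact iff_of_true (h _ haM) (h _ hbM)
    · exact iff_of_false (h _ haM) (h _ hbM)
  exact core w P hmod af bf (Nat.lt_succ_iff.mp af.isLt) (Nat.lt_succ_iff.mp bf.isLt)
    (fun h => hba (Fin.val_injective h).symm) ⟨af.isLt, haf⟩ ⟨bf.isLt, hbf⟩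
    cf (Nat.lt_succ_iff.mp cf.isLt) (fun h => hcf h.2)

theorem stmt10 (w : List Bool) (l : ℕ) :
    ((∀ v : List Bool, v <:+: w →
        ((∀ x ∈ v, x = false) ∨ (∀ x ∈ v, x = true)) → v.length ≤ l) →
      l + 4 < w.length → GraphPrime (GW w)) ∧
    (¬ GraphPrime (GW w) →
      (List.replicate (w.length - 4) false <:+: w ∨
       List.replicate (w.length - 4) true <:+: w)) := by
  constructor
  · intro hfac hlen
    by_contra hnp
    rcases part2 w hnp with h | h
    · have := hfac _ h (Or.inl fun x hx => List.eq_of_mem_replicate hx)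
      rw [List.length_replicate] at this
      omega
    · have := hfac _ h (Or.inr fun x hx => List.eq_of_mem_replicate hx)
      rw [List.length_replicate] at this
      omega
  · exact part2 w
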